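/- For every N ∈ ℕ, f(N) ≥ π(N) + π(N^{1/2}) + π(N^{1/4}) + π(N^{1/7}). In particular, the set A = {p : p prime, N^{1/2} < p ≤ N} ∪ {p, p² : p prime, N^{1/4} < p ≤ N^{1/2}} ∪ {p, p², p⁴ : p prime, N^{1/7} < p ≤ N^{1/4}} ∪ {p³, p⁵, p⁶, p⁷ : p prime, p ≤ N^{1/7}} is a subset of [N] with distinct subset products. -/

import Mathlib

open Finset


/-- A set of positive integers has *distinct subset products* if any two distinct
finite subsets have distinct products (the empty product is `1`). -/
def DistinctSubsetProds (A : Set ℕ) : Prop :=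
  ∀ B C : Finset ℕ, ↑B ⊆ A → ↑C ⊆ A → ∏ b ∈ B, b = ∏ c ∈ C, c → B = C

/-- `primePi x` is the number of primes `p` with `(p : ℝ) ≤ x`. -/
noncomputable def primePi (x : ℝ) : ℕ := {p : ℕ | p.Prime ∧ (p : ℝ) ≤ x}.ncard

/-- `maxDSP N` is the size of the largest subset of `{1, …, N}` with distinct
subset products. -/
noncomputable def maxDSP (N : ℕ) : ℕ :=
  sSup {k | ∃ A : Finset ℕ, ↑A ⊆ Set.Icc 1 N ∧ DistinctSubsetProds ↑A ∧ A.card = k}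


/-- Erdős' refined example: primes in `(N^{1/2}, N]`; `p, p²` for primes
`p ∈ (N^{1/4}, N^{1/2}]`; `p, p², p⁴` for primes `p ∈ (N^{1/7}, N^{1/4}]`; and
`p³, p⁵, p⁶, p⁷` for primes `p ≤ N^{1/7}`. -/
def erdosExample2 (N : ℕ) : Set ℕ :=
  {n : ℕ | ∃ p : ℕ, p.Prime ∧
    (((N : ℝ) ^ ((1 : ℝ) / 2) < (p : ℝ) ∧ p ≤ N ∧ n = p) ∨
     ((N : ℝ) ^ ((1 : ℝ) / 4) < (p : ℝ) ∧ (p : ℝ) ≤ (N : ℝ) ^ ((1 : ℝ) / 2) ∧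
        (n = p ∨ n = p ^ 2)) ∨
     ((N : ℝ) ^ ((1 : ℝ) / 7) < (p : ℝ) ∧ (p : ℝ) ≤ (N : ℝ) ^ ((1 : ℝ) / 4) ∧
        (n = p ∨ n = p ^ 2 ∨ n = p ^ 4)) ∨
     ((p : ℝ) ≤ (N : ℝ) ^ ((1 : ℝ) / 7) ∧
        (n = p ^ 3 ∨ n = p ^ 5 ∨ n = p ^ 6 ∨ n = p ^ 7)))}

-- 1 ≤ N from a prime below a power of N
lemma one_le_of_prime_le_rpow {N p : ℕ} {c : ℝ} (hc : c ≠ 0) (hp : p.Prime)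
    (h : (p : ℝ) ≤ (N : ℝ) ^ c) : (1 : ℝ) ≤ (N : ℝ) := by
  rcases Nat.eq_zero_or_pos N with rfl | hN
  · simp [Real.zero_rpow hc] at h
    have := hp.two_le
    exact absurd h (by push_cast; linarith [show (2:ℝ) ≤ (p:ℝ) by exact_mod_cast this])
  · exact_mod_cast hN

lemma rpow_chain {N : ℝ} (hN : 1 ≤ N) {a b : ℝ} (hab : a ≤ b) : N ^ a ≤ N ^ b :=
  Real.rpow_le_rpow_of_exponent_le hN hab

lemma pow_le_of_le_rpow {N p e : ℕ} {k : ℝ} (hk : 0 < k) (hek : (e:ℝ) ≤ k) (hp : p.Prime)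
    (h : (p : ℝ) ≤ (N : ℝ) ^ ((1 : ℝ) / k)) : p ^ e ≤ N := by
  have hN : (1:ℝ) ≤ (N:ℝ) := one_le_of_prime_le_rpow (by positivity) hp h
  have h0 : (0:ℝ) ≤ (N:ℝ) ^ ((1:ℝ)/k) := Real.rpow_nonneg (by linarith) _
  have h1 : (p:ℝ) ^ e ≤ ((N:ℝ) ^ ((1:ℝ)/k)) ^ e := pow_le_pow_left₀ (by positivity) h e
  have h2 : ((N:ℝ) ^ ((1:ℝ)/k)) ^ e = (N:ℝ) ^ ((e:ℝ)/k) := by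
    rw [← Real.rpow_natCast ((N:ℝ) ^ ((1:ℝ)/k)) e, ← Real.rpow_mul (by linarith)]
    ring_nf
  have h3 : (N:ℝ) ^ ((e:ℝ)/k) ≤ (N:ℝ) ^ (1:ℝ) := by
    apply rpow_chain hN
    rw [div_le_one hk]
    exact hek
  have : (p:ℝ) ^ e ≤ (N:ℝ) := by rw [Real.rpow_one] at h3; linarith [h2 ▸ h1]
  exact_mod_cast this

lemma mem_dvd_cases {N p n : ℕ} (hp : p.Prime) (hn : n ∈ erdosExample2 N) (hd : p ∣ n) :
    ∃ f : ℕ, n = p ^ f ∧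
      (((N:ℝ)^((1:ℝ)/2) < (p:ℝ) ∧ f = 1) ∨
       ((N:ℝ)^((1:ℝ)/4) < (p:ℝ) ∧ (p:ℝ) ≤ (N:ℝ)^((1:ℝ)/2) ∧ (f = 1 ∨ f = 2)) ∨
       ((N:ℝ)^((1:ℝ)/7) < (p:ℝ) ∧ (p:ℝ) ≤ (N:ℝ)^((1:ℝ)/4) ∧ (f = 1 ∨ f = 2 ∨ f = 4)) ∨
       ((p:ℝ) ≤ (N:ℝ)^((1:ℝ)/7) ∧ (f = 3 ∨ f = 5 ∨ f = 6 ∨ f = 7))) := by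
  obtain ⟨q, hq, hc⟩ := hn
  rcases hc with ⟨ha, hb, he⟩ | ⟨ha, hb, he⟩ | ⟨ha, hb, he⟩ | ⟨ha, he⟩
  · subst he
    obtain rfl : p = n := (Nat.prime_dvd_prime_iff_eq hp hq).mp hd
    exact ⟨1, (pow_one p).symm, Or.inl ⟨ha, rfl⟩⟩
  · rcases he with he | he <;> subst he
    · obtain rfl : p = n := (Nat.prime_dvd_prime_iff_eq hp hq).mp hd
      exact ⟨1, (pow_one p).symm, Or.inr (Or.inl ⟨ha, hb, Or.inl rfl⟩)⟩
    · obtain rfl : p = q := (Nat.prime_dvd_prime_iff_eq hp hq).mp (hp.dvd_of_dvd_pow hd)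
      exact ⟨2, rfl, Or.inr (Or.inl ⟨ha, hb, Or.inr rfl⟩)⟩
  · rcases he with he | he | he <;> subst he
    · obtain rfl : p = n := (Nat.prime_dvd_prime_iff_eq hp hq).mp hd
      exact ⟨1, (pow_one p).symm, Or.inr (Or.inr (Or.inl ⟨ha, hb, Or.inl rfl⟩))⟩
    · obtain rfl : p = q := (Nat.prime_dvd_prime_iff_eq hp hq).mp (hp.dvd_of_dvd_pow hd)
      exact ⟨2, rfl, Or.inr (Or.inr (Or.inl ⟨ha, hb, Or.inr (Or.inl rfl)⟩))⟩
    · obtain rfl : p = q := (Nat.prime_dvd_prime_iff_eq hp hq).mp (hp.dvd_of_dvd_pow hd)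
      exact ⟨4, rfl, Or.inr (Or.inr (Or.inl ⟨ha, hb, Or.inr (Or.inr rfl)⟩))⟩
  · rcases he with he | he | he | he <;> subst he <;>
      obtain rfl : p = q := (Nat.prime_dvd_prime_iff_eq hp hq).mp (hp.dvd_of_dvd_pow hd)
    · exact ⟨3, rfl, Or.inr (Or.inr (Or.inr ⟨ha, Or.inl rfl⟩))⟩
    · exact ⟨5, rfl, Or.inr (Or.inr (Or.inr ⟨ha, Or.inr (Or.inl rfl)⟩))⟩
    · exact ⟨6, rfl, Or.inr (Or.inr (Or.inr ⟨ha, Or.inr (Or.inr (Or.inl rfl))⟩))⟩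
    · exact ⟨7, rfl, Or.inr (Or.inr (Or.inr ⟨ha, Or.inr (Or.inr (Or.inr rfl))⟩))⟩

example (p n : ℕ) (hp : p.Prime) : (p ^ n).factorization p = n := by
  rw [hp.factorization_pow]; exact Finsupp.single_eq_same
lemma dss1 : ∀ S ∈ ({1}:Finset ℕ).powerset, ∀ T ∈ ({1}:Finset ℕ).powerset,
    S.sum id = T.sum id → S = T := by decide
lemma dss2 : ∀ S ∈ ({1,2}:Finset ℕ).powerset, ∀ T ∈ ({1,2}:Finset ℕ).powerset,
    S.sum id = T.sum id → S = T := by decide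
lemma dss3 : ∀ S ∈ ({1,2,4}:Finset ℕ).powerset, ∀ T ∈ ({1,2,4}:Finset ℕ).powerset,
    S.sum id = T.sum id → S = T := by decide
lemma dss4 : ∀ S ∈ ({3,5,6,7}:Finset ℕ).powerset, ∀ T ∈ ({3,5,6,7}:Finset ℕ).powerset,
    S.sum id = T.sum id → S = T := by decide

lemma allowed (N : ℕ) {p : ℕ} (hp : p.Prime) :
    ∃ Ap : Finset ℕ,
      (∀ n ∈ erdosExample2 N, p ∣ n → n.factorization p ∈ Ap) ∧
      (∀ S T : Finset ℕ, S ⊆ Ap → T ⊆ Ap → S.sum id = T.sum id → S = T) := by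
  have hfact : ∀ f : ℕ, (p ^ f).factorization p = f := fun f => by
    rw [hp.factorization_pow]; exact Finsupp.single_eq_same
  by_cases h7 : (p:ℝ) ≤ (N:ℝ)^((1:ℝ)/7)
  · refine ⟨{3,5,6,7}, ?_, fun S T hS hT h =>
      dss4 S (mem_powerset.2 hS) T (mem_powerset.2 hT) h⟩
    intro n hn hd
    obtain ⟨f, rfl, hcases⟩ := mem_dvd_cases hp hn hd
    rw [hfact]
    have hN : (1:ℝ) ≤ (N:ℝ) := one_le_of_prime_le_rpow (by norm_num) hp h7
    rcases hcases with ⟨ha, hf⟩ | ⟨ha, _, hf⟩ | ⟨ha, _, hf⟩ | ⟨_, hf⟩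
    · have := rpow_chain hN (show (1:ℝ)/7 ≤ 1/2 by norm_num); linarith
    · have := rpow_chain hN (show (1:ℝ)/7 ≤ 1/4 by norm_num); linarith
    · linarith
    · rcases hf with rfl | rfl | rfl | rfl <;> decide
  · by_cases h4 : (p:ℝ) ≤ (N:ℝ)^((1:ℝ)/4)
    · refine ⟨{1,2,4}, ?_, fun S T hS hT h =>
        dss3 S (mem_powerset.2 hS) T (mem_powerset.2 hT) h⟩
      intro n hn hd
      obtain ⟨f, rfl, hcases⟩ := mem_dvd_cases hp hn hd
      rw [hfact]
      have hN : (1:ℝ) ≤ (N:ℝ) := one_le_of_prime_le_rpow (by norm_num) hp h4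
      rcases hcases with ⟨ha, hf⟩ | ⟨ha, _, hf⟩ | ⟨_, _, hf⟩ | ⟨ha, hf⟩
      · have := rpow_chain hN (show (1:ℝ)/4 ≤ 1/2 by norm_num); linarith
      · linarith
      · rcases hf with rfl | rfl | rfl <;> decide
      · linarith
    · by_cases h2 : (p:ℝ) ≤ (N:ℝ)^((1:ℝ)/2)
      · refine ⟨{1,2}, ?_, fun S T hS hT h =>
          dss2 S (mem_powerset.2 hS) T (mem_powerset.2 hT) h⟩
        intro n hn hd
        obtain ⟨f, rfl, hcases⟩ := mem_dvd_cases hp hn hd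
        rw [hfact]
        have hN : (1:ℝ) ≤ (N:ℝ) := one_le_of_prime_le_rpow (by norm_num) hp h2
        rcases hcases with ⟨ha, hf⟩ | ⟨_, _, hf⟩ | ⟨_, hb, hf⟩ | ⟨ha, hf⟩
        · linarith
        · rcases hf with rfl | rfl <;> decide
        · linarith
        · have := rpow_chain hN (show (1:ℝ)/7 ≤ 1/4 by norm_num); linarith
      · refine ⟨{1}, ?_, fun S T hS hT h =>
          dss1 S (mem_powerset.2 hS) T (mem_powerset.2 hT) h⟩
        intro n hn hd
        obtain ⟨f, rfl, hcases⟩ := mem_dvd_cases hp hn hd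
        rw [hfact]
        rcases hcases with ⟨_, hf⟩ | ⟨_, hb, hf⟩ | ⟨_, hb, hf⟩ | ⟨ha, hf⟩
        · subst hf; decide
        · linarith
        · have hN : (1:ℝ) ≤ (N:ℝ) := one_le_of_prime_le_rpow (by norm_num) hp hb
          have := rpow_chain hN (show (1:ℝ)/4 ≤ 1/2 by norm_num); linarith
        · have hN : (1:ℝ) ≤ (N:ℝ) := one_le_of_prime_le_rpow (by norm_num) hp ha
          have := rpow_chain hN (show (1:ℝ)/7 ≤ 1/2 by norm_num); linarith

lemma mem_erdos_extract {N n : ℕ} (h : n ∈ erdosExample2 N) :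
    ∃ p e : ℕ, p.Prime ∧ 1 ≤ e ∧ n = p ^ e := by
  obtain ⟨p, hp, hc⟩ := h
  rcases hc with ⟨_, _, rfl⟩ | ⟨_, _, (rfl | rfl)⟩ | ⟨_, _, (rfl | rfl | rfl)⟩ |
    ⟨_, (rfl | rfl | rfl | rfl)⟩ <;>
  first
  | exact ⟨p, 1, hp, le_refl 1, (pow_one p).symm⟩
  | exact ⟨n, 1, hp, le_refl 1, (pow_one n).symm⟩
  | exact ⟨p, 2, hp, by omega, rfl⟩
  | exact ⟨p, 3, hp, by omega, rfl⟩
  | exact ⟨p, 4, hp, by omega, rfl⟩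
  | exact ⟨p, 5, hp, by omega, rfl⟩
  | exact ⟨p, 6, hp, by omega, rfl⟩
  | exact ⟨p, 7, hp, by omega, rfl⟩

theorem dspE (N : ℕ) : DistinctSubsetProds (erdosExample2 N) := by
  intro B C hB hC hprod
  have hne : ∀ (D : Finset ℕ), ↑D ⊆ erdosExample2 N → ∀ n ∈ D, n ≠ 0 := by
    intro D hD n hn
    obtain ⟨p, e, hp, _, rfl⟩ := mem_erdos_extract (hD hn)
    exact pow_ne_zero _ hp.pos.ne'
  have hfac : ∀ p : ℕ, ∑ n ∈ B, n.factorization p = ∑ n ∈ C, n.factorization p := by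
    intro p
    have := (Nat.factorization_prod (hne B hB)).symm.trans
      (hprod ▸ Nat.factorization_prod (hne C hC))
    calc ∑ n ∈ B, n.factorization p = (∑ n ∈ B, n.factorization) p := by
          rw [Finset.sum_apply']
      _ = (∑ n ∈ C, n.factorization) p := by rw [this]
      _ = ∑ n ∈ C, n.factorization p := by rw [Finset.sum_apply']
  have key : ∀ p : ℕ, p.Prime →
      B.filter (fun n => p ∣ n) = C.filter (fun n => p ∣ n) := by
    intro p hp
    obtain ⟨Ap, hmem, huniq⟩ := allowed N hp
    have hrec : ∀ (D : Finset ℕ), ↑D ⊆ erdosExample2 N →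
        ∀ n ∈ D.filter (fun n => p ∣ n), n = p ^ (n.factorization p) := by
      intro D hD n hn
      obtain ⟨hnD, hdvd⟩ := mem_filter.1 hn
      obtain ⟨f, hf, _⟩ := mem_dvd_cases hp (hD hnD) hdvd
      rw [hf, hp.factorization_pow, Finsupp.single_eq_same]
    have hinj : ∀ (D : Finset ℕ), ↑D ⊆ erdosExample2 N →
        Set.InjOn (fun n : ℕ => n.factorization p) ↑(D.filter (fun n => p ∣ n)) := by
      intro D hD a ha b hb hab
      rw [hrec D hD a ha, hrec D hD b hb]
      exact congrArg (p ^ ·) hab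
    have hsum : ∀ (D : Finset ℕ), ↑D ⊆ erdosExample2 N →
        ((D.filter (fun n => p ∣ n)).image (fun n => n.factorization p)).sum id =
          ∑ n ∈ D, n.factorization p := by
      intro D hD
      rw [Finset.sum_image (fun a ha b hb => hinj D hD ha hb)]
      exact Finset.sum_filter_of_ne (fun x _ h => Nat.dvd_of_factorization_pos h)
    have hsub : ∀ (D : Finset ℕ), ↑D ⊆ erdosExample2 N →
        (D.filter (fun n => p ∣ n)).image (fun n => n.factorization p) ⊆ Ap := by
      intro D hD x hx
      obtain ⟨n, hn, rfl⟩ := Finset.mem_image.1 hx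
      obtain ⟨hnD, hdvd⟩ := mem_filter.1 hn
      exact hmem n (hD hnD) hdvd
    have hT : (B.filter (fun n => p ∣ n)).image (fun n => n.factorization p) =
        (C.filter (fun n => p ∣ n)).image (fun n => n.factorization p) := by
      apply huniq _ _ (hsub B hB) (hsub C hC)
      rw [hsum B hB, hsum C hC, hfac p]
    have hback : ∀ (D : Finset ℕ), (hD : ↑D ⊆ erdosExample2 N) →
        D.filter (fun n => p ∣ n) =
          ((D.filter (fun n => p ∣ n)).image (fun n => n.factorization p)).image
            (fun e => p ^ e) := by
      intro D hD
      ext m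
      simp only [Finset.mem_image, exists_exists_and_eq_and]
      constructor
      · intro hm; exact ⟨m, hm, (hrec D hD m hm).symm⟩
      · rintro ⟨n, hn, rfl⟩; rwa [← hrec D hD n hn]
    rw [hback B hB, hback C hC, hT]
  ext n
  constructor <;> intro hn
  · obtain ⟨p, e, hp, he, rfl⟩ := mem_erdos_extract (hB hn)
    have hd : p ∣ p ^ e := dvd_pow_self p (by omega)
    have : p ^ e ∈ C.filter (fun n => p ∣ n) := (key p hp) ▸ (mem_filter.2 ⟨hn, hd⟩)
    exact (mem_filter.1 this).1
  · obtain ⟨p, e, hp, he, rfl⟩ := mem_erdos_extract (hC hn)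
    have hd : p ∣ p ^ e := dvd_pow_self p (by omega)
    have : p ^ e ∈ B.filter (fun n => p ∣ n) := (key p hp).symm ▸ (mem_filter.2 ⟨hn, hd⟩)
    exact (mem_filter.1 this).1

lemma erdos_subset (N : ℕ) : erdosExample2 N ⊆ Set.Icc 1 N := by
  intro n hn
  obtain ⟨p, hp, hc⟩ := hn
  rcases hc with ⟨_, hb, rfl⟩ | ⟨_, hb, (rfl | rfl)⟩ | ⟨_, hb, (rfl | rfl | rfl)⟩ |
    ⟨hb, (rfl | rfl | rfl | rfl)⟩
  · exact ⟨hp.pos, hb⟩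
  · refine ⟨hp.pos, ?_⟩
    have := pow_le_of_le_rpow (e := 1) (k := (2:ℝ)) (by norm_num) (by norm_num) hp hb
    simpa using this
  · exact ⟨Nat.one_le_pow _ _ hp.pos,
      pow_le_of_le_rpow (k := (2:ℝ)) (by norm_num) (by norm_num) hp hb⟩
  · refine ⟨hp.pos, ?_⟩
    have := pow_le_of_le_rpow (e := 1) (k := (4:ℝ)) (by norm_num) (by norm_num) hp hb
    simpa using this
  · exact ⟨Nat.one_le_pow _ _ hp.pos,
      pow_le_of_le_rpow (k := (4:ℝ)) (by norm_num) (by norm_num) hp hb⟩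
  · exact ⟨Nat.one_le_pow _ _ hp.pos,
      pow_le_of_le_rpow (k := (4:ℝ)) (by norm_num) (by norm_num) hp hb⟩
  · exact ⟨Nat.one_le_pow _ _ hp.pos,
      pow_le_of_le_rpow (k := (7:ℝ)) (by norm_num) (by norm_num) hp hb⟩
  · exact ⟨Nat.one_le_pow _ _ hp.pos,
      pow_le_of_le_rpow (k := (7:ℝ)) (by norm_num) (by norm_num) hp hb⟩
  · exact ⟨Nat.one_le_pow _ _ hp.pos,
      pow_le_of_le_rpow (k := (7:ℝ)) (by norm_num) (by norm_num) hp hb⟩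
  · exact ⟨Nat.one_le_pow _ _ hp.pos,
      pow_le_of_le_rpow (k := (7:ℝ)) (by norm_num) (by norm_num) hp hb⟩

lemma prime_le_rpow_le {N p : ℕ} {c : ℝ} (h0 : 0 < c) (h1 : c ≤ 1) (hp : p.Prime)
    (h : (p:ℝ) ≤ (N:ℝ)^c) : p ≤ N := by
  have hN : (1:ℝ) ≤ (N:ℝ) := one_le_of_prime_le_rpow h0.ne' hp h
  have h2 := rpow_chain hN h1
  rw [Real.rpow_one] at h2
  exact_mod_cast h.trans h2

open Classical in
lemma primePi_eq_card {N : ℕ} {x : ℝ} (hx : ∀ p : ℕ, p.Prime → (p:ℝ) ≤ x → p ≤ N) :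
    primePi x = ((Finset.range (N+1)).filter (fun p : ℕ => p.Prime ∧ (p:ℝ) ≤ x)).card := by
  have hset : {p : ℕ | p.Prime ∧ (p : ℝ) ≤ x} =
      ↑((Finset.range (N+1)).filter (fun p : ℕ => p.Prime ∧ (p:ℝ) ≤ x)) := by
    ext p
    simp only [Finset.coe_filter, Finset.mem_range, Set.mem_setOf_eq]
    constructor
    · rintro ⟨hp, hle⟩; exact ⟨Nat.lt_succ_of_le (hx p hp hle), hp, hle⟩
    · rintro ⟨_, hp, hle⟩; exact ⟨hp, hle⟩
  rw [primePi, hset, Set.ncard_coe_finset]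

open Classical in
noncomputable def eexp (N i p : ℕ) : ℕ :=
  if (N:ℝ)^((1:ℝ)/7) < (p:ℝ) then (if i = 0 then 1 else if i = 1 then 2 else 4)
  else (if i = 0 then 3 else if i = 1 then 5 else if i = 2 then 6 else 7)

lemma eexp_pos (N i p : ℕ) : 1 ≤ eexp N i p := by
  unfold eexp; split_ifs <;> omega

lemma prime_pow_inj {p q e f : ℕ} (hp : p.Prime) (hq : q.Prime) (he : 1 ≤ e)
    (h : p ^ e = q ^ f) : p = q ∧ e = f := by
  have hf : f ≠ 0 := by
    rintro rfl
    simp at h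
    rcases h with h | h
    · exact hp.one_lt.ne' h
    · omega
  have hpq : p = q := by
    have : p ∣ q ^ f := h ▸ dvd_pow_self p (by omega : e ≠ 0)
    exact (Nat.prime_dvd_prime_iff_eq hp hq).mp (hp.dvd_of_dvd_pow this)
  subst hpq
  exact ⟨rfl, Nat.pow_right_injective hp.two_le h⟩

lemma eexp_hi (N i p : ℕ) (h : (N:ℝ)^((1:ℝ)/7) < (p:ℝ)) :
    eexp N i p = if i = 0 then 1 else if i = 1 then 2 else 4 := by
  unfold eexp; rw [if_pos h]

lemma eexp_lo (N i p : ℕ) (h : ¬ (N:ℝ)^((1:ℝ)/7) < (p:ℝ)) :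
    eexp N i p = if i = 0 then 3 else if i = 1 then 5 else if i = 2 then 6 else 7 := by
  unfold eexp; rw [if_neg h]


lemma exp_code_inj_hi {i j : ℕ} (hi : i < 4) (hj : j < 4) (hi3 : i ≠ 3) (hj3 : j ≠ 3)
    (h : (if i = 0 then 1 else if i = 1 then 2 else 4) =
      (if j = 0 then (1:ℕ) else if j = 1 then 2 else 4)) : i = j := by
  interval_cases i <;> interval_cases j <;> simp_all

lemma exp_code_inj_lo {i j : ℕ} (hi : i < 4) (hj : j < 4)
    (h : (if i = 0 then 3 else if i = 1 then 5 else if i = 2 then 6 else 7) =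
      (if j = 0 then (3:ℕ) else if j = 1 then 5 else if j = 2 then 6 else 7)) : i = j := by
  interval_cases i <;> interval_cases j <;> simp_all


open Classical in
lemma count (N : ℕ) :
    primePi N + primePi ((N : ℝ) ^ ((1 : ℝ) / 2)) + primePi ((N : ℝ) ^ ((1 : ℝ) / 4)) +
      primePi ((N : ℝ) ^ ((1 : ℝ) / 7)) ≤ maxDSP N := by
  classical
  set Q1 := (Finset.range (N+1)).filter (fun p : ℕ => p.Prime ∧ (p:ℝ) ≤ (N:ℝ)) with hQ1
  set Q2 := (Finset.range (N+1)).filter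
    (fun p : ℕ => p.Prime ∧ (p:ℝ) ≤ (N:ℝ)^((1:ℝ)/2)) with hQ2
  set Q3 := (Finset.range (N+1)).filter
    (fun p : ℕ => p.Prime ∧ (p:ℝ) ≤ (N:ℝ)^((1:ℝ)/4)) with hQ3
  set Q4 := (Finset.range (N+1)).filter
    (fun p : ℕ => p.Prime ∧ (p:ℝ) ≤ (N:ℝ)^((1:ℝ)/7)) with hQ4
  set S : Finset (ℕ × ℕ) := ((({0} ×ˢ Q1) ∪ ({1} ×ˢ Q2)) ∪ ({2} ×ˢ Q3)) ∪ ({3} ×ˢ Q4)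
    with hS
  set F : ℕ × ℕ → ℕ := fun q => q.2 ^ (eexp N q.1 q.2) with hF
  set A := S.image F with hA
  have hmemS : ∀ q : ℕ × ℕ, q ∈ S ↔
      (q.1 = 0 ∧ q.2 ∈ Q1) ∨ (q.1 = 1 ∧ q.2 ∈ Q2) ∨ (q.1 = 2 ∧ q.2 ∈ Q3) ∨
        (q.1 = 3 ∧ q.2 ∈ Q4) := by
    intro q
    simp [hS, Finset.mem_union, Finset.mem_product, or_assoc, -Finset.singleton_product]
  have hsubE : ↑A ⊆ erdosExample2 N := by
    intro n hn
    simp only [hA, Finset.coe_image, Set.mem_image, Finset.mem_coe] at hn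
    obtain ⟨⟨i, p⟩, hqS, rfl⟩ := hn
    rcases (hmemS _).1 hqS with ⟨h0, hq⟩ | ⟨h0, hq⟩ | ⟨h0, hq⟩ | ⟨h0, hq⟩ <;>
      obtain ⟨hp, hple⟩ := (Finset.mem_filter.1 hq).2 <;>
      simp only at h0 <;> subst h0
    · by_cases h7 : (p:ℝ) ≤ (N:ℝ)^((1:ℝ)/7)
      · refine ⟨p, hp, Or.inr (Or.inr (Or.inr ⟨h7, Or.inl ?_⟩))⟩
        simp [hF, eexp_lo N _ p (not_lt.2 h7)]
      · by_cases h4 : (p:ℝ) ≤ (N:ℝ)^((1:ℝ)/4)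
        · refine ⟨p, hp, Or.inr (Or.inr (Or.inl ⟨not_le.1 h7, h4, Or.inl ?_⟩))⟩
          simp [hF, eexp_hi N _ p (lt_of_not_ge h7)]
        · by_cases h2 : (p:ℝ) ≤ (N:ℝ)^((1:ℝ)/2)
          · refine ⟨p, hp, Or.inr (Or.inl ⟨not_le.1 h4, h2, Or.inl ?_⟩)⟩
            simp [hF, eexp_hi N _ p (lt_of_not_ge h7)]
          · refine ⟨p, hp, Or.inl ⟨not_le.1 h2, by exact_mod_cast hple, ?_⟩⟩
            simp [hF, eexp_hi N _ p (lt_of_not_ge h7)]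
    · by_cases h7 : (p:ℝ) ≤ (N:ℝ)^((1:ℝ)/7)
      · refine ⟨p, hp, Or.inr (Or.inr (Or.inr ⟨h7, Or.inr (Or.inl ?_)⟩))⟩
        simp [hF, eexp_lo N _ p (not_lt.2 h7)]
      · by_cases h4 : (p:ℝ) ≤ (N:ℝ)^((1:ℝ)/4)
        · refine ⟨p, hp, Or.inr (Or.inr (Or.inl ⟨not_le.1 h7, h4, Or.inr (Or.inl ?_)⟩))⟩
          simp [hF, eexp_hi N _ p (lt_of_not_ge h7)]
        · refine ⟨p, hp, Or.inr (Or.inl ⟨not_le.1 h4, hple, Or.inr ?_⟩)⟩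
          simp [hF, eexp_hi N _ p (lt_of_not_ge h7)]
    · by_cases h7 : (p:ℝ) ≤ (N:ℝ)^((1:ℝ)/7)
      · refine ⟨p, hp, Or.inr (Or.inr (Or.inr ⟨h7, Or.inr (Or.inr (Or.inl ?_))⟩))⟩
        simp [hF, eexp_lo N _ p (not_lt.2 h7)]
      · refine ⟨p, hp, Or.inr (Or.inr (Or.inl ⟨not_le.1 h7, hple, Or.inr (Or.inr ?_)⟩))⟩
        simp [hF, eexp_hi N _ p (lt_of_not_ge h7)]
    · refine ⟨p, hp, Or.inr (Or.inr (Or.inr ⟨hple, Or.inr (Or.inr (Or.inr ?_))⟩))⟩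
      simp [hF, eexp_lo N _ p (not_lt.2 hple)]
  have hinjF : Set.InjOn F ↑S := by
    rintro ⟨i, p⟩ ha ⟨j, q⟩ hb hab
    have haS : (i, p) ∈ S := Finset.mem_coe.1 ha
    have hbS : (j, q) ∈ S := Finset.mem_coe.1 hb
    simp only [hF] at hab
    have hpp : p.Prime := by
      rcases (hmemS _).1 haS with ⟨_, h⟩ | ⟨_, h⟩ | ⟨_, h⟩ | ⟨_, h⟩ <;>
        exact ((Finset.mem_filter.1 h).2).1
    have hqp : q.Prime := by
      rcases (hmemS _).1 hbS with ⟨_, h⟩ | ⟨_, h⟩ | ⟨_, h⟩ | ⟨_, h⟩ <;>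
        exact ((Finset.mem_filter.1 h).2).1
    obtain ⟨rfl, hEe⟩ := prime_pow_inj hpp hqp (eexp_pos N i p) hab
    have hi : (i = 0) ∨ (i = 1 ∧ (p:ℝ) ≤ (N:ℝ)^((1:ℝ)/2)) ∨
        (i = 2 ∧ (p:ℝ) ≤ (N:ℝ)^((1:ℝ)/4)) ∨ (i = 3 ∧ (p:ℝ) ≤ (N:ℝ)^((1:ℝ)/7)) := by
      rcases (hmemS _).1 haS with ⟨h0, h⟩ | ⟨h0, h⟩ | ⟨h0, h⟩ | ⟨h0, h⟩ <;>
        simp only at h0 <;>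
        [exact Or.inl h0;
         exact Or.inr (Or.inl ⟨h0, ((Finset.mem_filter.1 h).2).2⟩);
         exact Or.inr (Or.inr (Or.inl ⟨h0, ((Finset.mem_filter.1 h).2).2⟩));
         exact Or.inr (Or.inr (Or.inr ⟨h0, ((Finset.mem_filter.1 h).2).2⟩))]
    have hj : (j = 0) ∨ (j = 1 ∧ (p:ℝ) ≤ (N:ℝ)^((1:ℝ)/2)) ∨
        (j = 2 ∧ (p:ℝ) ≤ (N:ℝ)^((1:ℝ)/4)) ∨ (j = 3 ∧ (p:ℝ) ≤ (N:ℝ)^((1:ℝ)/7)) := by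
      rcases (hmemS _).1 hbS with ⟨h0, h⟩ | ⟨h0, h⟩ | ⟨h0, h⟩ | ⟨h0, h⟩ <;>
        simp only at h0 <;>
        [exact Or.inl h0;
         exact Or.inr (Or.inl ⟨h0, ((Finset.mem_filter.1 h).2).2⟩);
         exact Or.inr (Or.inr (Or.inl ⟨h0, ((Finset.mem_filter.1 h).2).2⟩));
         exact Or.inr (Or.inr (Or.inr ⟨h0, ((Finset.mem_filter.1 h).2).2⟩))]
    have hi4 : i < 4 := by rcases hi with h | ⟨h, _⟩ | ⟨h, _⟩ | ⟨h, _⟩ <;> omega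
    have hj4 : j < 4 := by rcases hj with h | ⟨h, _⟩ | ⟨h, _⟩ | ⟨h, _⟩ <;> omega
    have : i = j := by
      by_cases hbr : (N:ℝ)^((1:ℝ)/7) < (p:ℝ)
      · have hi3 : i ≠ 3 := by
          rintro rfl
          rcases hi with h | ⟨h, _⟩ | ⟨h, _⟩ | ⟨_, hle⟩ <;> first | omega | linarith
        have hj3 : j ≠ 3 := by
          rintro rfl
          rcases hj with h | ⟨h, _⟩ | ⟨h, _⟩ | ⟨_, hle⟩ <;> first | omega | linarith
        rw [eexp_hi N i p hbr, eexp_hi N j p hbr] at hEe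
        exact exp_code_inj_hi hi4 hj4 hi3 hj3 hEe
      · rw [eexp_lo N i p hbr, eexp_lo N j p hbr] at hEe
        exact exp_code_inj_lo hi4 hj4 hEe
    exact Prod.ext_iff.2 ⟨this, rfl⟩
  have hdisj1 : Disjoint (({0} : Finset ℕ) ×ˢ Q1) (({1} : Finset ℕ) ×ˢ Q2) := by
    rw [Finset.disjoint_left]
    rintro ⟨i, p⟩ ha hb
    rw [Finset.mem_product] at ha hb
    simp only [Finset.mem_singleton] at ha hb
    omega
  have hdisj2 : Disjoint ((({0} : Finset ℕ) ×ˢ Q1) ∪ (({1} : Finset ℕ) ×ˢ Q2))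
      (({2} : Finset ℕ) ×ˢ Q3) := by
    rw [Finset.disjoint_left]
    rintro ⟨i, p⟩ ha hb
    rw [Finset.mem_union] at ha
    rw [Finset.mem_product] at hb
    rcases ha with ha | ha <;> rw [Finset.mem_product] at ha <;>
      simp only [Finset.mem_singleton] at ha hb <;> omega
  have hdisj3 : Disjoint (((({0} : Finset ℕ) ×ˢ Q1) ∪ (({1} : Finset ℕ) ×ˢ Q2)) ∪
      (({2} : Finset ℕ) ×ˢ Q3)) (({3} : Finset ℕ) ×ˢ Q4) := by
    rw [Finset.disjoint_left]
    rintro ⟨i, p⟩ ha hb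
    rw [Finset.mem_union, Finset.mem_union] at ha
    rw [Finset.mem_product] at hb
    rcases ha with (ha | ha) | ha <;> rw [Finset.mem_product] at ha <;>
      simp only [Finset.mem_singleton] at ha hb <;> omega
  have hcardS : S.card = Q1.card + Q2.card + Q3.card + Q4.card := by
    rw [hS, Finset.card_union_of_disjoint hdisj3, Finset.card_union_of_disjoint hdisj2,
      Finset.card_union_of_disjoint hdisj1]
    simp [Finset.card_product]
  have e1 : primePi ((N : ℕ) : ℝ) = Q1.card :=
    primePi_eq_card (fun p hp h => by exact_mod_cast h)
  have e2 : primePi ((N:ℝ)^((1:ℝ)/2)) = Q2.card :=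
    primePi_eq_card (fun p hp h => prime_le_rpow_le (by norm_num) (by norm_num) hp h)
  have e3 : primePi ((N:ℝ)^((1:ℝ)/4)) = Q3.card :=
    primePi_eq_card (fun p hp h => prime_le_rpow_le (by norm_num) (by norm_num) hp h)
  have e4 : primePi ((N:ℝ)^((1:ℝ)/7)) = Q4.card :=
    primePi_eq_card (fun p hp h => prime_le_rpow_le (by norm_num) (by norm_num) hp h)
  have hAcard : A.card = S.card := Finset.card_image_of_injOn hinjF
  have hbdd : BddAbove {k | ∃ A' : Finset ℕ, ↑A' ⊆ Set.Icc 1 N ∧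
      DistinctSubsetProds ↑A' ∧ A'.card = k} := by
    refine ⟨N, ?_⟩
    rintro k ⟨A', hA', _, rfl⟩
    have hsub : A' ⊆ Finset.Icc 1 N := by
      intro x hx
      have := hA' (Finset.mem_coe.2 hx)
      rw [Finset.mem_Icc]
      exact ⟨this.1, this.2⟩
    calc A'.card ≤ (Finset.Icc 1 N).card := Finset.card_le_card hsub
      _ = N := by rw [Nat.card_Icc]; omega
  have hmem : A.card ∈ {k | ∃ A' : Finset ℕ, ↑A' ⊆ Set.Icc 1 N ∧
      DistinctSubsetProds ↑A' ∧ A'.card = k} := by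
    refine ⟨A, fun n hn => erdos_subset N (hsubE hn), ?_, rfl⟩
    intro B C hB hC h
    exact dspE N B C (hB.trans hsubE) (hC.trans hsubE) h
  calc primePi N + primePi ((N:ℝ)^((1:ℝ)/2)) + primePi ((N:ℝ)^((1:ℝ)/4)) +
      primePi ((N:ℝ)^((1:ℝ)/7)) = A.card := by
        rw [e1, e2, e3, e4, hAcard, hcardS]
    _ ≤ maxDSP N := le_csSup hbdd hmem

/-- `f(N) ≥ π(N) + π(N^{1/2}) + π(N^{1/4}) + π(N^{1/7})`; in particular the set
`erdosExample2 N` is a subset of `[N]` with distinct subset products. -/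
theorem stmt17 (N : ℕ) :
    primePi N + primePi ((N : ℝ) ^ ((1 : ℝ) / 2)) + primePi ((N : ℝ) ^ ((1 : ℝ) / 4)) +
        primePi ((N : ℝ) ^ ((1 : ℝ) / 7)) ≤ maxDSP N ∧
      erdosExample2 N ⊆ Set.Icc 1 N ∧ DistinctSubsetProds (erdosExample2 N) := by
  exact ⟨count N, erdos_subset N, dspE N⟩
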